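/- The following data form a category Epifin: objects are selfic surjections p: {1,...,k} → {1,...,ℓ}; a morphism from p: {1,...,k} → {1,...,ℓ} to q: {1,...,m} → {1,...,n} is a pair of maps (u: {1,...,k} → {1,...,m}, v: {1,...,ℓ} → {1,...,n}) with q∘u = v∘p such that the induced map from {1,...,k} to the pullback {1,...,m} ×_{{1,...,n}} {1,...,ℓ} is injective. Composition of two such morphisms again satisfies the injectivity condition, and identities satisfy it, so Epifin is a well-defined category. -/
import Mathlib


/-- `firstIn f j` is the minimum of the preimage `f⁻¹(j)`. -/
def firstIn {k l : ℕ} (f : Fin k → Fin l) (j : Fin l) : WithTop (Fin k) :=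
  (Finset.univ.filter fun i => f i = j).min

/-- A surjection `f : Fin k → Fin l` is *selfic* if `j ↦ min f⁻¹(j)` is monotone. -/
def IsSelfic {k l : ℕ} (f : Fin k → Fin l) : Prop :=
  Function.Surjective f ∧ Monotone (firstIn f)

/-- The condition for `(u, v)` to be a morphism in `Epifin` from the selfic
surjection `p : Fin k → Fin l` to the selfic surjection `q : Fin m → Fin n`:
the square commutes and the induced map into the pullback
`Fin m ×_{Fin n} Fin l` is injective. -/
def EpiMor {k l m n : ℕ} (p : Fin k → Fin l) (q : Fin m → Fin n)
    (u : Fin k → Fin m) (v : Fin l → Fin n) : Prop :=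
  q ∘ u = v ∘ p ∧ Function.Injective fun i => (u i, p i)

/-- `Epifin` is a well-defined category: identities are morphisms
and the composition of two morphisms is again a morphism (in particular, the
injectivity-into-the-pullback condition is preserved under composition). -/
theorem epifin_is_category {k l m n m' n' : ℕ}
    (p : Fin k → Fin l) (q : Fin m → Fin n) (r : Fin m' → Fin n')
    (hp : IsSelfic p) (hq : IsSelfic q) (hr : IsSelfic r)
    (u : Fin k → Fin m) (v : Fin l → Fin n)
    (u' : Fin m → Fin m') (v' : Fin n → Fin n')
    (huv : EpiMor p q u v) (huv' : EpiMor q r u' v') :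
    EpiMor p p (id : Fin k → Fin k) (id : Fin l → Fin l) ∧
      EpiMor p r (u' ∘ u) (v' ∘ v) := by
  obtain ⟨hc, hi⟩ := huv
  obtain ⟨hc', hi'⟩ := huv'
  refine ⟨⟨rfl, fun i j h => ?_⟩, ⟨?_, fun i j h => ?_⟩⟩
  · exact (Prod.mk.injEq _ _ _ _ ▸ h).1
  · ext x; simp only [Function.comp_apply]
    rw [show r (u' (u x)) = v' (q (u x)) from congrFun hc' (u x),
      show q (u x) = v (p x) from congrFun hc x]
  · simp only [Function.comp_apply, Prod.mk.injEq] at h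
    obtain ⟨h1, h2⟩ := h
    have hq : q (u i) = q (u j) := by
      rw [show q (u i) = v (p i) from congrFun hc i,
        show q (u j) = v (p j) from congrFun hc j, h2]
    have : u i = u j := hi' (by simp [h1, hq])
    exact hi (by simp [this, h2])
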